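/- Let X be a metric space and n ≥ 2 an integer. Then X admits a Lipschitz retraction X(n) → X (a map r from nonempty subsets of X with at most n elements to X such that r({a}) = a for every a ∈ X and d(r(A), r(B)) ≤ L·d_H(A,B) for some constant L) if and only if X admits a Lipschitz n-mean μ with the additional property that μ(a₁,…,aₙ) = μ(b₁,…,bₙ) whenever {a₁,…,aₙ} = {b₁,…,bₙ} as sets. -/

import Mathlib

open Metric Set

private lemma exists_enum_aux {X : Type*} (n : ℕ) (hn : 0 < n) (A : Set X)
    (h1 : A.Nonempty) (h2 : A.Finite) (h3 : A.ncard ≤ n) :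
    ∃ f : Fin n → X, Set.range f = A := by
  classical
  lift A to Finset X using h2
  have hpos : 0 < A.card := Finset.card_pos.2 (by simpa using h1)
  have hle : A.card ≤ n := by simpa [Set.ncard_coe_finset] using h3
  refine ⟨fun k => (A.equivFin.symm ⟨k % A.card, Nat.mod_lt _ hpos⟩ : X), ?_⟩
  ext x
  constructor
  · rintro ⟨k, rfl⟩
    exact (A.equivFin.symm _).2
  · intro hx
    set j := A.equivFin ⟨x, hx⟩ with hj
    refine ⟨⟨j, lt_of_lt_of_le j.2 hle⟩, ?_⟩
    simp only [Nat.mod_eq_of_lt j.2]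
    simp [hj]

private lemma ncard_range_le {X : Type*} {n : ℕ} (x : Fin n → X) :
    (Set.range x).ncard ≤ n := by
  classical
  rw [← Set.image_univ, ← Finset.coe_univ, ← Finset.coe_image, Set.ncard_coe_finset]
  exact (Finset.card_image_le).trans (by simp)

/-- A metric space `X` admits a Lipschitz retraction `X(n) → X`
(where `X(n)` is the space of nonempty subsets of `X` with at most `n` elements,
with the Hausdorff distance) if and only if it admits a Lipschitz `n`-mean `μ`
(sum metric on `Xⁿ`) with the additional property that `μ` depends only on the set
of its arguments. -/
theorem lipschitz_retraction_iff_set_symmetric_lipschitz_mean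
    (X : Type*) [MetricSpace X] (n : ℕ) (hn : 2 ≤ n) :
    (∃ L : ℝ, 0 ≤ L ∧
      ∃ r : {A : Set X // A.Nonempty ∧ A.Finite ∧ A.ncard ≤ n} → X,
        (∀ (a : X) (A : {A : Set X // A.Nonempty ∧ A.Finite ∧ A.ncard ≤ n}),
          A.1 = {a} → r A = a) ∧
        (∀ A B : {A : Set X // A.Nonempty ∧ A.Finite ∧ A.ncard ≤ n},
          dist (r A) (r B) ≤ L * Metric.hausdorffDist A.1 B.1)) ↔
    (∃ L : ℝ, 0 ≤ L ∧
      ∃ μ : (Fin n → X) → X,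
        (∀ (x : Fin n → X) (π : Equiv.Perm (Fin n)), μ (x ∘ π) = μ x) ∧
        (∀ a : X, μ (fun _ => a) = a) ∧
        (∀ x y : Fin n → X, dist (μ x) (μ y) ≤ L * ∑ k, dist (x k) (y k)) ∧
        (∀ x y : Fin n → X, Set.range x = Set.range y → μ x = μ y)) := by
  classical
  haveI : Nonempty (Fin n) := ⟨⟨0, by omega⟩⟩
  constructor
  · rintro ⟨L, hL, r, hr1, hr2⟩
    have hsub : ∀ x : Fin n → X,
        (Set.range x).Nonempty ∧ (Set.range x).Finite ∧ (Set.range x).ncard ≤ n :=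
      fun x => ⟨Set.range_nonempty x, Set.finite_range x, ncard_range_le x⟩
    refine ⟨L, hL, fun x => r ⟨Set.range x, hsub x⟩, ?_, ?_, ?_, ?_⟩
    · intro x π
      exact congrArg r (Subtype.ext (π.surjective.range_comp x))
    · intro a
      exact hr1 a _ (Set.range_const)
    · intro x y
      refine (hr2 _ _).trans (mul_le_mul_of_nonneg_left ?_ hL)
      refine hausdorffDist_le_of_mem_dist
        (Finset.sum_nonneg fun i _ => dist_nonneg) ?_ ?_
      · rintro z ⟨k, rfl⟩
        exact ⟨y k, ⟨k, rfl⟩,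
          Finset.single_le_sum (fun i _ => dist_nonneg) (Finset.mem_univ k)⟩
      · rintro z ⟨k, rfl⟩
        refine ⟨x k, ⟨k, rfl⟩, ?_⟩
        rw [dist_comm]
        exact Finset.single_le_sum (fun i _ => dist_nonneg) (Finset.mem_univ k)
    · intro x y hxy
      exact congrArg r (Subtype.ext hxy)
  · rintro ⟨L, hL, μ, hperm, hconst, hlip, hset⟩
    set L₀ : ℝ := L + 1 with hL₀def
    have hL₀pos : 0 < L₀ := by positivity
    have hlip' : ∀ x y : Fin n → X,
        dist (μ x) (μ y) ≤ L₀ * ∑ k, dist (x k) (y k) := by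
      intro x y
      refine (hlip x y).trans (mul_le_mul_of_nonneg_right (by simp [hL₀def]) ?_)
      exact Finset.sum_nonneg fun i _ => dist_nonneg
    have henum : ∀ A : {A : Set X // A.Nonempty ∧ A.Finite ∧ A.ncard ≤ n},
        ∃ f : Fin n → X, Set.range f = A.1 :=
      fun A => exists_enum_aux n (by omega) A.1 A.2.1 A.2.2.1 A.2.2.2
    choose e he using henum
    have hCpos : (0 : ℝ) < 3 * L₀ * n := by positivity
    refine ⟨3 * L₀ * n, hCpos.le, fun A => μ (e A), ?_, ?_⟩
    · intro a A hA
      show μ (e A) = a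
      have h1 : Set.range (e A) = {a} := by rw [he A, hA]
      have h2 : μ (e A) = μ (fun _ => a) := hset _ _ (by rw [h1, Set.range_const])
      rw [h2, hconst]
    · intro A B
      set d := Metric.hausdorffDist A.1 B.1 with hd
      have hdnn : 0 ≤ d := hausdorffDist_nonneg
      have key : ∀ ε > (0:ℝ), dist (μ (e A)) (μ (e B)) ≤ 3 * L₀ * n * (d + ε) := by
        intro ε hε
        have hedist : EMetric.hausdorffEdist A.1 B.1 ≠ ⊤ :=
          hausdorffEdist_ne_top_of_nonempty_of_bounded A.2.1 B.2.1
            A.2.2.1.isBounded B.2.2.1.isBounded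
        have hAB : ∀ a ∈ A.1, ∃ b ∈ B.1, dist a b ≤ d + ε := by
          intro a ha
          have h1 : infDist a B.1 ≤ d := infDist_le_hausdorffDist_of_mem ha hedist
          obtain ⟨b, hb, hb2⟩ := (infDist_lt_iff B.2.1).1 (lt_of_le_of_lt h1 (lt_add_of_pos_right d hε))
          exact ⟨b, hb, hb2.le⟩
        have hBA : ∀ b ∈ B.1, ∃ a ∈ A.1, dist b a ≤ d + ε := by
          intro b hb
          have h1 : infDist b A.1 ≤ d := by
            have := infDist_le_hausdorffDist_of_mem hb
              (ne_of_eq_of_ne EMetric.hausdorffEdist_comm hedist)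
            rwa [hausdorffDist_comm] at this
          obtain ⟨a, ha, ha2⟩ := (infDist_lt_iff A.2.1).1 (lt_of_le_of_lt h1 (lt_add_of_pos_right d hε))
          exact ⟨a, ha, ha2.le⟩
        choose! f hfB hfd using hAB
        choose! g hgA hgd using hBA
        set C : Set X := f '' A.1 with hCdef
        have hCB : C ⊆ B.1 := by
          rintro c ⟨a, ha, rfl⟩
          exact hfB a ha
        have hCsub : C.Nonempty ∧ C.Finite ∧ C.ncard ≤ n :=
          ⟨A.2.1.image f, A.2.2.1.image f,
            (Set.ncard_image_le A.2.2.1).trans A.2.2.2⟩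
        set Cs : {A : Set X // A.Nonempty ∧ A.Finite ∧ A.ncard ≤ n} := ⟨C, hCsub⟩
        have hstep1 : dist (μ (e A)) (μ (e Cs)) ≤ L₀ * (n * (d + ε)) := by
          have hre : μ (e Cs) = μ (f ∘ e A) := by
            refine hset _ _ ?_
            rw [he Cs, Set.range_comp, he A]
          rw [hre]
          refine (hlip' _ _).trans (mul_le_mul_of_nonneg_left ?_ hL₀pos.le)
          calc ∑ k, dist (e A k) ((f ∘ e A) k)
              ≤ ∑ _k : Fin n, (d + ε) := by
                refine Finset.sum_le_sum fun k _ => ?_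
                exact hfd _ (by rw [← he A]; exact Set.mem_range_self k)
            _ = n * (d + ε) := by simp [Finset.sum_const, nsmul_eq_mul, mul_add]
        have hstep2 : dist (μ (e Cs)) (μ (e B)) ≤ L₀ * (n * (2 * (d + ε))) := by
          set h : X → X := fun b => if b ∈ C then b else f (g b) with hhdef
          have hrangeh : h '' B.1 = C := by
            apply subset_antisymm
            · rintro z ⟨b, hb, rfl⟩
              by_cases hbc : b ∈ C
              · simpa [hhdef, hbc] using hbc
              · simp only [hhdef, hbc, if_false]
                exact Set.mem_image_of_mem f (hgA b hb)
            · intro c hc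
              exact ⟨c, hCB hc, by simp [hhdef, hc]⟩
          have hdisth : ∀ b ∈ B.1, dist b (h b) ≤ 2 * (d + ε) := by
            intro b hb
            by_cases hbc : b ∈ C
            · simp only [hhdef, hbc, if_true, dist_self]
              positivity
            · simp only [hhdef, hbc, if_false]
              calc dist b (f (g b)) ≤ dist b (g b) + dist (g b) (f (g b)) :=
                    dist_triangle _ _ _
                _ ≤ (d + ε) + (d + ε) := add_le_add (hgd b hb) (hfd _ (hgA b hb))
                _ = 2 * (d + ε) := by ring
          have hre : μ (e Cs) = μ (h ∘ e B) := by
            refine hset _ _ ?_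
            rw [he Cs, Set.range_comp, he B, hrangeh]
          rw [hre]
          refine (hlip' _ _).trans (mul_le_mul_of_nonneg_left ?_ hL₀pos.le)
          calc ∑ k, dist ((h ∘ e B) k) (e B k)
              ≤ ∑ _k : Fin n, (2 * (d + ε)) := by
                refine Finset.sum_le_sum fun k _ => ?_
                rw [dist_comm]
                exact hdisth _ (by rw [← he B]; exact Set.mem_range_self k)
            _ = n * (2 * (d + ε)) := by simp [Finset.sum_const, nsmul_eq_mul]
        calc dist (μ (e A)) (μ (e B))
            ≤ dist (μ (e A)) (μ (e Cs)) + dist (μ (e Cs)) (μ (e B)) :=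
              dist_triangle _ _ _
          _ ≤ L₀ * (n * (d + ε)) + L₀ * (n * (2 * (d + ε))) := add_le_add hstep1 hstep2
          _ = 3 * L₀ * n * (d + ε) := by ring
      refine le_of_forall_pos_le_add ?_
      intro δ hδ
      have hε : (0:ℝ) < δ / (3 * L₀ * n) := by positivity
      have := key _ hε
      calc dist (μ (e A)) (μ (e B)) ≤ 3 * L₀ * n * (d + δ / (3 * L₀ * n)) := this
        _ = 3 * L₀ * n * d + δ := by field_simp
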